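/- Let P be a set of 8m points in the plane and Π a closed tour visiting all points of P. Partition P along Π into m consecutive sections of 8 points each, and assign each point p in section S_i the range r(p) = max distance from p to any point in S_{i−1} ∪ S_i ∪ S_{i+1}. Then for each section, the sum of r(p)^β over p ∈ S_i is at most 8 · 15^β times the maximum of |pq|^β over pairs p, q consecutive on Π within S_{i−1} ∪ S_i ∪ S_{i+1}; summing over all sections, the total cost Σ_{p∈P} r(p)^β is at most 24 · 15^β · Σ_{e∈Π} |e|^β. -/

import Mathlib

open Real

/-- Index range (shifted by one period `8*m` to stay in ℕ) of the three consecutive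
sections `S_{i-1} ∪ S_i ∪ S_{i+1}` of a closed tour of `8*m` points. -/
def secRange (m i : ℕ) : Finset ℕ := Finset.Ico (8 * i + 8 * m - 8) (8 * i + 8 * m + 16)

/-- The range assigned to the point with index `j` of section `S_i`: the maximum
distance from it to any point of `S_{i-1} ∪ S_i ∪ S_{i+1}`. -/
noncomputable def rng (m : ℕ) (pts : ℕ → ℂ) (i j : ℕ) : ℝ :=
  (secRange m i).sup' (by unfold secRange; exact Finset.nonempty_Ico.mpr (by omega))
    (fun q => dist (pts j) (pts q))

/-- The maximum of `|pq|^β` over pairs `p, q` consecutive on the tour within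
`S_{i-1} ∪ S_i ∪ S_{i+1}`. -/
noncomputable def maxConsec (m : ℕ) (β : ℝ) (pts : ℕ → ℂ) (i : ℕ) : ℝ :=
  (Finset.Ico (8 * i + 8 * m - 8) (8 * i + 8 * m + 15)).sup'
    (Finset.nonempty_Ico.mpr (by omega)) (fun q => dist (pts q) (pts (q + 1)) ^ β)

/-- Partition a closed tour `pts` of `8*m` points (indices taken mod
`8*m`, expressed by periodicity) into `m` consecutive sections `S_i` of 8 points each,
and assign to each point `j` of `S_i` the range `rng m pts i j`, the maximum distance
from it to a point of `S_{i-1} ∪ S_i ∪ S_{i+1}`.  Then for each section the sum of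
`r(p)^β` is at most `8 · 15^β` times the maximum of `|pq|^β` over pairs consecutive on
the tour within the three sections, and the total cost `Σ_p r(p)^β` is at most
`24 · 15^β · Σ_{e ∈ tour} |e|^β`. -/
lemma chain_bound (pts : ℕ → ℂ) (M : ℝ) :
    ∀ n a, (∀ q ∈ Finset.Ico a (a + n), dist (pts q) (pts (q + 1)) ≤ M) →
      dist (pts a) (pts (a + n)) ≤ (n : ℝ) * M := by
  intro n
  induction n with
  | zero => intro a _; simp
  | succ k ih =>
    intro a h
    have h1 := ih a (fun q hq => h q (by simp only [Finset.mem_Ico] at hq ⊢; omega))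
    have h2 : dist (pts (a + k)) (pts (a + k + 1)) ≤ M :=
      h (a + k) (by simp only [Finset.mem_Ico]; omega)
    have h3 := dist_triangle (pts a) (pts (a + k)) (pts (a + k + 1))
    have h4 : dist (pts a) (pts (a + (k + 1))) ≤ (k : ℝ) * M + M := by
      rw [show a + (k + 1) = a + k + 1 by omega]
      linarith
    push_cast
    linarith

lemma sum_Ico_shift (e : ℕ → ℝ) (P : ℕ) (hP : 1 ≤ P) (hper : ∀ q, e (q + P) = e q) :
    ∀ a, ∑ q ∈ Finset.Ico a (a + P), e q = ∑ q ∈ Finset.Ico 0 P, e q := by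
  intro a
  induction a with
  | zero => simp
  | succ b ih =>
    rw [← ih]
    have h1 : ∑ q ∈ Finset.Ico (b + 1) (b + 1 + P), e q
        = (∑ q ∈ Finset.Ico (b + 1) (b + P), e q) + e (b + P) := by
      rw [show b + 1 + P = (b + P) + 1 by omega]
      exact Finset.sum_Ico_succ_top (by omega) e
    have h2 : ∑ q ∈ Finset.Ico b (b + P), e q
        = e b + ∑ q ∈ Finset.Ico (b + 1) (b + P), e q :=
      Finset.sum_eq_sum_Ico_succ_bot (by omega) e
    rw [h1, h2, hper b]
    ring

lemma sum_blocks (e : ℕ → ℝ) : ∀ n c,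
    ∑ i ∈ Finset.range n, ∑ q ∈ Finset.Ico (8 * i + c) (8 * i + c + 8), e q
      = ∑ q ∈ Finset.Ico c (c + 8 * n), e q := by
  intro n
  induction n with
  | zero => simp
  | succ k ih =>
    intro c
    rw [Finset.sum_range_succ, ih c,
      show Finset.Ico (8 * k + c) (8 * k + c + 8) = Finset.Ico (c + 8 * k) (c + 8 * (k + 1)) from by
        congr 1 <;> omega,
      Finset.sum_Ico_consecutive e (show c ≤ c + 8 * k by omega)
        (show c + 8 * k ≤ c + 8 * (k + 1) by omega)]

lemma rng_pow_le (m : ℕ) (hm : 1 ≤ m) (β : ℝ) (hβ : 1 ≤ β) (pts : ℕ → ℂ)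
    (hper : ∀ i, pts (i + 8 * m) = pts i) (i j : ℕ) (hi : i < m)
    (hj : 8 * i ≤ j) (hj2 : j < 8 * i + 8) :
    rng m pts i j ^ β ≤ 15 ^ β * maxConsec m β pts i := by
  have hA : 8 * i + 8 * m - 8 + 8 = 8 * i + 8 * m := by omega
  set A := 8 * i + 8 * m - 8 with hA'
  have hne : (Finset.Ico A (A + 23)).Nonempty := Finset.nonempty_Ico.mpr (by omega)
  set M := (Finset.Ico A (A + 23)).sup' hne (fun q => dist (pts q) (pts (q + 1))) with hMdef
  have hM0 : 0 ≤ M := by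
    obtain ⟨r, hr⟩ := hne
    rw [hMdef]
    exact le_trans dist_nonneg (Finset.le_sup' (fun q => dist (pts q) (pts (q + 1))) hr)
  have hedge : ∀ r ∈ Finset.Ico A (A + 23), dist (pts r) (pts (r + 1)) ≤ M := by
    intro r hr
    rw [hMdef]
    exact Finset.le_sup' (fun q => dist (pts q) (pts (q + 1))) hr
  have hne2 : (secRange m i).Nonempty := by
    unfold secRange; exact Finset.nonempty_Ico.mpr (by omega)
  obtain ⟨q, hq, hrq⟩ := Finset.exists_mem_eq_sup' hne2 (fun q => dist (pts j) (pts q))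
  have hrng : rng m pts i j = dist (pts j) (pts q) := by unfold rng; exact hrq
  have hq' : A ≤ q ∧ q < A + 24 := by
    simp only [secRange, Finset.mem_Ico] at hq; omega
  have hdist : dist (pts j) (pts q) ≤ 15 * M := by
    rw [show pts j = pts (j + 8 * m) from (hper j).symm]
    set j' := j + 8 * m with hj'def
    have hjr : A + 8 ≤ j' ∧ j' < A + 16 := by omega
    rcases le_or_gt q j' with hle | hlt
    · have hc := chain_bound pts M (j' - q) q
        (fun r hr => hedge r (by simp only [Finset.mem_Ico] at hr ⊢; omega))
      rw [show q + (j' - q) = j' by omega] at hc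
      rw [dist_comm]
      calc dist (pts q) (pts j') ≤ ((j' - q : ℕ) : ℝ) * M := hc
        _ ≤ 15 * M := by
            apply mul_le_mul_of_nonneg_right _ hM0
            exact_mod_cast (show j' - q ≤ 15 by omega)
    · have hc := chain_bound pts M (q - j') j'
        (fun r hr => hedge r (by simp only [Finset.mem_Ico] at hr ⊢; omega))
      rw [show j' + (q - j') = q by omega] at hc
      calc dist (pts j') (pts q) ≤ ((q - j' : ℕ) : ℝ) * M := hc
        _ ≤ 15 * M := by
            apply mul_le_mul_of_nonneg_right _ hM0
            exact_mod_cast (show q - j' ≤ 15 by omega)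
  rw [hrng]
  have h1 : dist (pts j) (pts q) ^ β ≤ (15 * M) ^ β :=
    Real.rpow_le_rpow dist_nonneg hdist (by linarith)
  have h2 : ((15 : ℝ) * M) ^ β = 15 ^ β * M ^ β := Real.mul_rpow (by norm_num) hM0
  have h3 : M ^ β ≤ maxConsec m β pts i := by
    obtain ⟨r, hr, hMr⟩ := Finset.exists_mem_eq_sup' hne (fun q => dist (pts q) (pts (q + 1)))
    rw [hMdef, hMr]
    apply Finset.le_sup' (fun q => dist (pts q) (pts (q + 1)) ^ β)
    simp only [Finset.mem_Ico] at hr ⊢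
    omega
  calc dist (pts j) (pts q) ^ β ≤ (15 * M) ^ β := h1
    _ = 15 ^ β * M ^ β := h2
    _ ≤ 15 ^ β * maxConsec m β pts i :=
        mul_le_mul_of_nonneg_left h3 (Real.rpow_nonneg (by norm_num) β)

theorem section_power_assignment_cost
    (m : ℕ) (hm : 1 ≤ m) (β : ℝ) (hβ : 1 ≤ β) (pts : ℕ → ℂ)
    (hper : ∀ i, pts (i + 8 * m) = pts i) :
    (∀ i < m, ∑ j ∈ Finset.Ico (8 * i) (8 * i + 8), rng m pts i j ^ β
        ≤ 8 * 15 ^ β * maxConsec m β pts i) ∧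
    (∑ i ∈ Finset.range m, ∑ j ∈ Finset.Ico (8 * i) (8 * i + 8), rng m pts i j ^ β
        ≤ 24 * 15 ^ β * ∑ q ∈ Finset.range (8 * m), dist (pts q) (pts (q + 1)) ^ β) := by
  set e : ℕ → ℝ := fun q => dist (pts q) (pts (q + 1)) ^ β with he
  have e_nonneg : ∀ q, 0 ≤ e q := fun q => Real.rpow_nonneg dist_nonneg β
  have heper : ∀ q, e (q + 8 * m) = e q := by
    intro q
    simp only [he]
    rw [show q + 8 * m + 1 = (q + 1) + 8 * m by omega, hper, hper]
  have part1 : ∀ i < m, ∑ j ∈ Finset.Ico (8 * i) (8 * i + 8), rng m pts i j ^ β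
      ≤ 8 * 15 ^ β * maxConsec m β pts i := by
    intro i hi
    have hb : ∀ j ∈ Finset.Ico (8 * i) (8 * i + 8),
        rng m pts i j ^ β ≤ 15 ^ β * maxConsec m β pts i := by
      intro j hj
      simp only [Finset.mem_Ico] at hj
      exact rng_pow_le m hm β hβ pts hper i j hi hj.1 hj.2
    calc ∑ j ∈ Finset.Ico (8 * i) (8 * i + 8), rng m pts i j ^ β
        ≤ ∑ _j ∈ Finset.Ico (8 * i) (8 * i + 8), 15 ^ β * maxConsec m β pts i :=
          Finset.sum_le_sum hb
      _ = 8 * 15 ^ β * maxConsec m β pts i := by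
          rw [Finset.sum_const, Nat.card_Ico, show 8 * i + 8 - 8 * i = 8 by omega,
            nsmul_eq_mul]
          push_cast
          ring
  refine ⟨part1, ?_⟩
  have hmax_le : ∀ i ∈ Finset.range m, maxConsec m β pts i
      ≤ ∑ q ∈ Finset.Ico (8 * i + 8 * m - 8) (8 * i + 8 * m + 16), e q := by
    intro i hi
    apply Finset.sup'_le
    intro r hr
    have hr' : r ∈ Finset.Ico (8 * i + 8 * m - 8) (8 * i + 8 * m + 16) := by
      simp only [Finset.mem_Ico] at hr ⊢; omega
    exact Finset.single_le_sum (fun q _ => e_nonneg q) hr'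
  have hsplit : ∀ i ∈ Finset.range m,
      ∑ q ∈ Finset.Ico (8 * i + 8 * m - 8) (8 * i + 8 * m + 16), e q
      = (∑ q ∈ Finset.Ico (8 * i + (8 * m - 8)) (8 * i + (8 * m - 8) + 8), e q)
      + (∑ q ∈ Finset.Ico (8 * i + 8 * m) (8 * i + 8 * m + 8), e q)
      + (∑ q ∈ Finset.Ico (8 * i + (8 * m + 8)) (8 * i + (8 * m + 8) + 8), e q) := by
    intro i hi
    rw [show 8 * i + (8 * m - 8) + 8 = 8 * i + 8 * m by omega,
      show 8 * i + (8 * m - 8) = 8 * i + 8 * m - 8 by omega,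
      show 8 * i + (8 * m + 8) + 8 = 8 * i + 8 * m + 16 by omega,
      show 8 * i + (8 * m + 8) = 8 * i + 8 * m + 8 by omega,
      Finset.sum_Ico_consecutive e (show 8 * i + 8 * m - 8 ≤ 8 * i + 8 * m by omega)
        (show 8 * i + 8 * m ≤ 8 * i + 8 * m + 8 by omega),
      Finset.sum_Ico_consecutive e (show 8 * i + 8 * m - 8 ≤ 8 * i + 8 * m + 8 by omega)
        (show 8 * i + 8 * m + 8 ≤ 8 * i + 8 * m + 16 by omega)]
  have hshift := sum_Ico_shift e (8 * m) (by omega) heper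
  have hb : ∀ c, ∑ i ∈ Finset.range m, ∑ q ∈ Finset.Ico (8 * i + c) (8 * i + c + 8), e q
      = ∑ q ∈ Finset.Ico 0 (8 * m), e q := fun c => by rw [sum_blocks e m c, hshift c]
  have part2sum : ∑ i ∈ Finset.range m, maxConsec m β pts i
      ≤ 3 * ∑ q ∈ Finset.Ico 0 (8 * m), e q := by
    calc ∑ i ∈ Finset.range m, maxConsec m β pts i
        ≤ ∑ i ∈ Finset.range m,
            ((∑ q ∈ Finset.Ico (8 * i + (8 * m - 8)) (8 * i + (8 * m - 8) + 8), e q)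
            + (∑ q ∈ Finset.Ico (8 * i + 8 * m) (8 * i + 8 * m + 8), e q)
            + (∑ q ∈ Finset.Ico (8 * i + (8 * m + 8)) (8 * i + (8 * m + 8) + 8), e q)) := by
          apply Finset.sum_le_sum
          intro i hi
          rw [← hsplit i hi]
          exact hmax_le i hi
      _ = 3 * ∑ q ∈ Finset.Ico 0 (8 * m), e q := by
          rw [Finset.sum_add_distrib, Finset.sum_add_distrib,
            hb (8 * m - 8), hb (8 * m), hb (8 * m + 8)]
          ring
  calc ∑ i ∈ Finset.range m, ∑ j ∈ Finset.Ico (8 * i) (8 * i + 8), rng m pts i j ^ β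
      ≤ ∑ i ∈ Finset.range m, 8 * 15 ^ β * maxConsec m β pts i :=
        Finset.sum_le_sum (fun i hi => part1 i (Finset.mem_range.mp hi))
    _ = 8 * 15 ^ β * ∑ i ∈ Finset.range m, maxConsec m β pts i := by
        rw [← Finset.mul_sum]
    _ ≤ 8 * 15 ^ β * (3 * ∑ q ∈ Finset.Ico 0 (8 * m), e q) :=
        mul_le_mul_of_nonneg_left part2sum (by positivity)
    _ = 24 * 15 ^ β * ∑ q ∈ Finset.range (8 * m), e q := by
        rw [Finset.range_eq_Ico]; ring
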